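/- Let F be a family of subsets of [n] such that there are no two sets A,B ∈ F with A ⊂ B and |B \ A| > k. Then |F| ≤ Σ_{i=⌊(n-k)/2⌋}^{⌊(n+k)/2⌋} C(n,i). -/

import Mathlib

open Finset

namespace ErdosAux

/-- Symmetric chain decomposition of the subsets of `range n`. -/
def scd : ℕ → List (List (Finset ℕ))
  | 0 => [[∅]]
  | n+1 => (scd n).flatMap (fun l =>
      (l ++ [insert n (l.getLast?.getD ∅)]) ::
      (if l.length ≤ 1 then [] else [l.dropLast.map (insert n)]))

/-- Invariant: `l` is a symmetric chain in the powerset of `range n`. -/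
def Good (n : ℕ) (l : List (Finset ℕ)) : Prop :=
  l ≠ [] ∧
  (∀ (i : ℕ) (hi : i < l.length), l[i] ⊆ range n) ∧
  (∃ a, 2 * a + l.length = n + 1 ∧ ∀ (i : ℕ) (hi : i < l.length), l[i].card = a + i) ∧
  (∀ (i j : ℕ) (hi : i < l.length) (hj : j < l.length), i ≤ j → l[i] ⊆ l[j])

theorem good_scd : ∀ n, ∀ l ∈ scd n, Good n l := by
  intro n
  induction n with
  | zero =>
    intro l hc
    simp [scd] at hc
    subst hc
    refine ⟨by simp, ?_, ⟨0, by simp, ?_⟩, ?_⟩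
    · intro i hi; simp
    · intro i hi
      have : i = 0 := by simpa using hi
      subst this; simp
    · intro i j hi hj hij
      have : i = 0 := by simpa using hi
      have : j = 0 := by simpa using hj
      subst_vars; simp
  | succ n ih =>
    intro l hc
    simp only [scd, List.mem_flatMap] at hc
    obtain ⟨d, hd, hc⟩ := hc
    obtain ⟨hne, hsub, ⟨a, ha, hcard⟩, hmono⟩ := ih d hd
    have hdl : 0 < d.length := List.length_pos_iff.2 hne
    have hlast : d.getLast?.getD ∅ = d[d.length - 1] := by
      rw [List.getLast?_eq_getLast hne]
      simp [List.getLast_eq_getElem]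
    have hnotmem : ∀ (i : ℕ) (hi : i < d.length), n ∉ d[i] := by
      intro i hi h
      have := hsub i hi h
      simp at this
    simp only [List.mem_cons] at hc
    rcases hc with hc | hc
    · -- chain 1 : d ++ [insert n (last d)]
      subst hc
      have hlen : (d ++ [insert n (d.getLast?.getD ∅)]).length = d.length + 1 := by simp
      have hget : ∀ (i : ℕ) (hi : i < d.length + 1),
          (d ++ [insert n (d.getLast?.getD ∅)])[i]'(by simpa using hi) =
            if h : i < d.length then d[i] else insert n (d[d.length - 1]) := by
        intro i hi
        split
        · rw [List.getElem_append_left]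
        · have : i = d.length := by omega
          subst this
          rw [List.getElem_append_right (by omega)]
          simp [hlast]
      refine ⟨by simp, ?_, ⟨a, ?_, ?_⟩, ?_⟩
      · intro i hi
        rw [hget i (by simpa using hi)]
        split
        · exact (hsub i _).trans (fun x hx => mem_range.2 (by have := mem_range.1 hx; omega))
        · exact insert_subset (by simp) ((hsub _ _).trans (fun x hx => mem_range.2 (by have := mem_range.1 hx; omega)))
      · simp only [List.length_append, List.length_singleton]; omega
      · intro i hi
        simp only [hlen] at hi
        rw [hget i hi]
        split
        · exact hcard i _
        · have hi' : i = d.length := by omega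
          rw [card_insert_of_notMem (hnotmem _ _), hcard]
          omega
      · intro i j hi hj hij
        simp only [hlen] at hi hj
        rw [hget i hi, hget j hj]
        split <;> split
        · exact hmono _ _ _ _ hij
        · exact (hmono _ (d.length - 1) ‹_› (by omega) (by omega)).trans (subset_insert _ _)
        · omega
        · exact subset_rfl
    · -- chain 2 : (dropLast d).map (insert n)
      rcases le_or_gt d.length 1 with h1 | h1
      · simp [h1] at hc
      · simp only [if_neg (by omega : ¬ d.length ≤ 1), List.mem_singleton] at hc
        subst hc
        have hlen : (d.dropLast.map (insert n)).length = d.length - 1 := by simp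
        have hget : ∀ (i : ℕ) (hi : i < d.length - 1),
            (d.dropLast.map (insert n))[i]'(by simpa using hi) = insert n (d[i]'(by omega)) := by
          intro i hi
          simp [List.getElem_dropLast]
        refine ⟨?_, ?_, ⟨a + 1, by omega, ?_⟩, ?_⟩
        · simp only [ne_eq, ← List.length_pos_iff]
          omega
        · intro i hi
          simp only [hlen] at hi
          rw [hget i hi]
          exact insert_subset (by simp) ((hsub _ _).trans (fun x hx => mem_range.2 (by have := mem_range.1 hx; omega)))
        · intro i hi
          simp only [hlen] at hi
          rw [hget i hi, card_insert_of_notMem (hnotmem _ _), hcard]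
          omega
        · intro i j hi hj hij
          simp only [hlen] at hi hj
          rw [hget i hi, hget j hj]
          exact insert_subset_insert _ (hmono _ _ _ _ hij)


theorem mem_scd : ∀ n, ∀ A : Finset ℕ, A ⊆ range n → ∃ l ∈ scd n, A ∈ l := by
  intro n
  induction n with
  | zero =>
    intro A hA
    have : A = ∅ := by
      rw [range_zero, subset_empty] at hA; exact hA
    exact ⟨[∅], by simp [scd, this]⟩
  | succ n ih =>
    intro A hA
    by_cases hn : n ∈ A
    · obtain ⟨l, hl, hAl⟩ := ih (A.erase n) (fun x hx => by
        have := hA (mem_of_mem_erase hx)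
        simp only [mem_range] at this ⊢
        have := ne_of_mem_erase hx
        omega)
      obtain ⟨hne, -, -, -⟩ := good_scd n l hl
      have hA' : insert n (A.erase n) = A := insert_erase hn
      rcases List.mem_append.1 (by rw [List.dropLast_append_getLast hne]; exact hAl) with h | h
      · have hlen2 : ¬ l.length ≤ 1 := by
          have h1 := List.length_pos_iff.2 (List.ne_nil_of_mem h)
          rw [List.length_dropLast] at h1
          omega
        refine ⟨l.dropLast.map (insert n), ?_, ?_⟩
        · simp only [scd, List.mem_flatMap]
          exact ⟨l, hl, by simp [hlen2]⟩
        · rw [← hA']; exact List.mem_map_of_mem h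
      · refine ⟨l ++ [insert n (l.getLast?.getD ∅)], ?_, ?_⟩
        · simp only [scd, List.mem_flatMap]; exact ⟨l, hl, by simp⟩
        · have hg : l.getLast?.getD ∅ = l.getLast hne := by
            rw [List.getLast?_eq_getLast hne]; rfl
          have h' : A.erase n = l.getLast hne := by simpa using h
          rw [hg, ← h', hA']
          simp
    · obtain ⟨l, hl, hAl⟩ := ih A (fun x hx => by
        have := hA hx
        simp only [mem_range] at this ⊢
        rcases Nat.lt_succ_iff_lt_or_eq.1 this with h | h
        · exact h
        · exact absurd (h ▸ hx) hn)
      refine ⟨l ++ [insert n (l.getLast?.getD ∅)], ?_, by simp [hAl]⟩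
      simp only [scd, List.mem_flatMap]
      exact ⟨l, hl, by simp⟩

theorem length_scd : ∀ n, ((scd n).flatMap id).length = 2 ^ n := by
  intro n
  induction n with
  | zero => simp [scd]
  | succ n ih =>
    rw [scd, List.flatMap_assoc, List.length_flatMap]
    rw [List.length_flatMap] at ih
    have : ∀ l ∈ scd n, ((((l ++ [insert n (l.getLast?.getD ∅)]) ::
        (if l.length ≤ 1 then [] else [l.dropLast.map (insert n)])).flatMap id).length)
        = 2 * l.length := by
      intro l hl
      obtain ⟨hne, -, -, -⟩ := good_scd n l hl
      have h1 : 0 < l.length := List.length_pos_iff.2 hne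
      by_cases h : l.length ≤ 1
      · simp [h]; omega
      · simp [h, List.length_dropLast]; omega
    rw [List.map_congr_left this]
    have : ∀ L : List (List (Finset ℕ)),
        (L.map (fun l => 2 * l.length)).sum = 2 * (L.map (fun l => l.length)).sum := by
      intro L
      induction L with
      | nil => simp
      | cons a L ihL => simp [ihL]; ring
    rw [this]
    simp only [id] at ih
    rw [ih]
    ring


theorem flat_scd (n : ℕ) : ((scd n).flatMap id).toFinset = (range n).powerset := by
  ext A
  simp only [List.mem_toFinset, List.mem_flatMap, id, mem_powerset]
  constructor
  · rintro ⟨l, hl, hA⟩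
    obtain ⟨-, hsub, -, -⟩ := good_scd n l hl
    obtain ⟨i, hi, rfl⟩ := List.mem_iff_getElem.1 hA
    exact hsub i hi
  · exact mem_scd n A

theorem nodup_scd (n : ℕ) : ((scd n).flatMap id).Nodup := by
  have h1 : ((scd n).flatMap id).dedup.length = 2 ^ n := by
    rw [← List.card_toFinset, flat_scd, card_powerset, card_range]
  have h2 := List.dedup_sublist ((scd n).flatMap id)
  have h3 := h2.eq_of_length (by rw [h1, length_scd])
  rw [← h3]
  exact List.nodup_dedup _


theorem countP_eq_card_filter {α : Type*} [DecidableEq α] (l : List α) (hl : l.Nodup)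
    (p : α → Prop) [DecidablePred p] :
    l.countP (fun a => decide (p a)) = (l.toFinset.filter p).card := by
  rw [List.countP_eq_length_filter, ← List.toFinset_card_of_nodup (hl.filter _)]
  congr 1
  ext a
  simp [List.mem_filter]

theorem chain_bound (n k : ℕ) (l : List (Finset ℕ)) (hl : Good n l)
    (F : Finset (Finset ℕ)) (hF : ∀ A ∈ F, ∀ B ∈ F, A ⊆ B → B.card ≤ A.card + k) :
    (F ∩ l.toFinset).card ≤
      l.countP (fun A => decide (A.card ∈ Icc ((n - k) / 2) ((n + k) / 2))) := by
  obtain ⟨hne, hsub, ⟨a, ha, hcard⟩, hmono⟩ := hl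
  set m := l.length with hm
  have hm1 : 0 < m := List.length_pos_iff.2 hne
  set w1 := (n - k) / 2
  set w2 := (n + k) / 2
  -- injectivity of card on the chain
  have hinj : ∀ A ∈ l.toFinset, ∀ B ∈ l.toFinset, A.card = B.card → A = B := by
    intro A hA B hB hAB
    obtain ⟨i, hi, rfl⟩ := List.mem_iff_getElem.1 (List.mem_toFinset.1 hA)
    obtain ⟨j, hj, rfl⟩ := List.mem_iff_getElem.1 (List.mem_toFinset.1 hB)
    rw [hcard i hi, hcard j hj] at hAB
    have : i = j := by omega
    subst this; rfl
  have hnodup : l.Nodup := by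
    rw [List.nodup_iff_injective_get]
    intro i j hij
    exact Fin.ext (by
      have := hinj (l.get i) (by simp [List.mem_toFinset, List.get_mem]) (l.get j)
        (by simp [List.mem_toFinset, List.get_mem]) (by rw [hij])
      have h1 := hcard i.1 i.2
      have h2 := hcard j.1 j.2
      simp only [List.get_eq_getElem] at hij
      rw [hij] at h1
      omega)
  -- comparability
  have hcomp : ∀ A ∈ l.toFinset, ∀ B ∈ l.toFinset, A.card ≤ B.card → A ⊆ B := by
    intro A hA B hB hAB
    obtain ⟨i, hi, rfl⟩ := List.mem_iff_getElem.1 (List.mem_toFinset.1 hA)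
    obtain ⟨j, hj, rfl⟩ := List.mem_iff_getElem.1 (List.mem_toFinset.1 hB)
    rw [hcard i hi, hcard j hj] at hAB
    exact hmono i j hi hj (by omega)
  -- image of card
  have himg : l.toFinset.image Finset.card = Icc a (a + m - 1) := by
    ext x
    simp only [mem_image, List.mem_toFinset, mem_Icc]
    constructor
    · rintro ⟨A, hA, rfl⟩
      obtain ⟨i, hi, rfl⟩ := List.mem_iff_getElem.1 hA
      rw [hcard i hi]
      omega
    · rintro ⟨h1, h2⟩
      refine ⟨l[x - a]'(by omega), List.getElem_mem _, ?_⟩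
      rw [hcard (x - a) (by omega)]
      omega
  -- RHS evaluation
  have hrhs : l.countP (fun A => decide (A.card ∈ Icc w1 w2)) =
      min (a + m - 1) w2 + 1 - max a w1 := by
    rw [countP_eq_card_filter l hnodup]
    have e1 : (l.toFinset.image Finset.card).filter (· ∈ Icc w1 w2) =
        (l.toFinset.filter fun A => A.card ∈ Icc w1 w2).image Finset.card :=
      filter_image
    have e2 : ((l.toFinset.filter fun A => A.card ∈ Icc w1 w2).image Finset.card).card =
        (l.toFinset.filter fun A => A.card ∈ Icc w1 w2).card :=
      card_image_of_injOn (fun A hA B hB h =>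
        hinj A (filter_subset _ _ hA) B (filter_subset _ _ hB) h)
    have e3 : Icc a (a + m - 1) ∩ Icc w1 w2 = Icc (max a w1) (min (a + m - 1) w2) := by
      ext x
      simp only [mem_inter, mem_Icc]
      omega
    rw [← e2, ← e1, himg, filter_mem_eq_inter, e3, Nat.card_Icc]
  -- LHS bound
  set G := F ∩ l.toFinset with hG
  set S := G.image Finset.card with hS
  have hGS : G.card = S.card :=
    (card_image_of_injOn (fun A hA B hB h =>
      hinj A (inter_subset_right (hG ▸ hA)) B (inter_subset_right (hG ▸ hB)) h)).symm
  have hSsub : S ⊆ Icc a (a + m - 1) := by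
    rw [← himg]
    exact image_subset_image inter_subset_right
  have hSm : S.card ≤ m := by
    have := card_le_card hSsub
    rw [Nat.card_Icc] at this
    omega
  have hSk : S.card ≤ k + 1 := by
    rcases S.eq_empty_or_nonempty with h | h
    · simp [h]
    · have hmin := S.min'_mem h
      have hdsub : S ⊆ Icc (S.min' h) (S.min' h + k) := by
        intro x hx
        rw [mem_Icc]
        refine ⟨S.min'_le x hx, ?_⟩
        obtain ⟨A, hA, rfl⟩ := mem_image.1 hx
        obtain ⟨B, hB, hBx⟩ := mem_image.1 hmin
        have hcomp' := hcomp B (inter_subset_right hB) A (inter_subset_right hA)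
          (by rw [hBx]; exact S.min'_le _ hx)
        have := hF B (inter_subset_left hB) A (inter_subset_left hA) hcomp'
        omega
      have := card_le_card hdsub
      rw [Nat.card_Icc] at this
      omega
  rw [hrhs, ← hGS] at *
  omega


theorem card_le_sum_inter {α : Type*} [DecidableEq α] :
    ∀ (L : List (List α)) (F : Finset α), (∀ x ∈ F, ∃ l ∈ L, x ∈ l) →
      F.card ≤ (L.map (fun l => (F ∩ l.toFinset).card)).sum := by
  intro L
  induction L with
  | nil =>
    intro F h
    have : F = ∅ := eq_empty_of_forall_notMem fun x hx => by
      obtain ⟨l, hl, -⟩ := h x hx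
      simp at hl
    simp [this]
  | cons c L ih =>
    intro F h
    have h1 := ih (F \ c.toFinset) (fun x hx => by
      obtain ⟨l, hl, hxl⟩ := h x (mem_sdiff.1 hx).1
      rcases List.mem_cons.1 hl with rfl | hl
      · exact absurd (List.mem_toFinset.2 hxl) (mem_sdiff.1 hx).2
      · exact ⟨l, hl, hxl⟩)
    have h2 : ((F \ c.toFinset).card : ℕ) ≤
        (L.map (fun l => (F ∩ l.toFinset).card)).sum := by
      refine h1.trans (List.sum_le_sum ?_)
      intro l hl
      exact card_le_card (inter_subset_inter sdiff_subset Subset.rfl)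
    calc F.card = (F ∩ c.toFinset).card + (F \ c.toFinset).card :=
          (card_inter_add_card_sdiff F c.toFinset).symm
      _ ≤ (F ∩ c.toFinset).card + (L.map (fun l => (F ∩ l.toFinset).card)).sum :=
          Nat.add_le_add_left h2 _
      _ = ((c :: L).map (fun l => (F ∩ l.toFinset).card)).sum := by simp

theorem card_filter_powerset (n : ℕ) (W : Finset ℕ) :
    (((range n).powerset).filter (fun A => A.card ∈ W)).card = ∑ i ∈ W, n.choose i := by
  have e1 : ((range n).powerset).filter (fun A => A.card ∈ W) =
      W.biUnion (fun i => powersetCard i (range n)) := by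
    ext A
    simp only [mem_filter, mem_powerset, mem_biUnion, mem_powersetCard]
    constructor
    · rintro ⟨h1, h2⟩; exact ⟨A.card, h2, h1, rfl⟩
    · rintro ⟨i, hi, h1, rfl⟩; exact ⟨h1, hi⟩
  rw [e1, card_biUnion]
  · refine Finset.sum_congr rfl fun i _ => ?_
    rw [card_powersetCard, card_range]
  · intro i hi j hj hij
    rw [Function.onFun, disjoint_left]
    intro A hA hA'
    rw [mem_powersetCard] at hA hA'
    omega

end ErdosAux

/-- Erdős' theorem: if `F` contains no `A ⊂ B` with `|B \ A| > k`, then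
`|F| ≤ ∑_{i=⌊(n-k)/2⌋}^{⌊(n+k)/2⌋} C(n,i)`. -/
theorem erdos (n k : ℕ) (hk : 0 < k) (F : Finset (Finset (Fin n)))
    (hF : ∀ A ∈ F, ∀ B ∈ F, A ⊂ B → ¬ (k < (B \ A).card)) :
    F.card ≤ ∑ i ∈ Finset.Icc ((n - k) / 2) ((n + k) / 2), n.choose i := by
  classical
  open ErdosAux in
  set e : Fin n ↪ ℕ := ⟨Fin.val, Fin.val_injective⟩ with he
  set F' : Finset (Finset ℕ) := F.image (fun A => A.map e) with hF'def
  have hinj : Function.Injective (fun A : Finset (Fin n) => A.map e) :=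
    fun A B h => Finset.map_injective e h
  have hcardF : F'.card = F.card := Finset.card_image_of_injective F hinj
  have hcov : ∀ x ∈ F', ∃ l ∈ scd n, x ∈ l := by
    intro A hA
    refine mem_scd n A ?_
    obtain ⟨B, -, rfl⟩ := Finset.mem_image.1 hA
    intro y hy
    obtain ⟨b, -, rfl⟩ := Finset.mem_map.1 hy
    simp only [Finset.mem_range, he, Function.Embedding.coeFn_mk]
    exact b.2
  have hF2 : ∀ A ∈ F', ∀ B ∈ F', A ⊆ B → B.card ≤ A.card + k := by
    intro A hA B hB hAB
    obtain ⟨A₀, hA₀, rfl⟩ := Finset.mem_image.1 hA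
    obtain ⟨B₀, hB₀, rfl⟩ := Finset.mem_image.1 hB
    rw [Finset.card_map, Finset.card_map]
    have hsub : A₀ ⊆ B₀ := (Finset.map_subset_map).1 hAB
    rcases eq_or_ne A₀ B₀ with rfl | hne
    · omega
    · have := hF A₀ hA₀ B₀ hB₀ ⟨hsub, fun h => hne (Finset.Subset.antisymm hsub h)⟩
      have hc := Finset.card_sdiff_add_card_eq_card hsub
      omega
  have step1 : F'.card ≤ ((scd n).map (fun l => (F' ∩ l.toFinset).card)).sum :=
    card_le_sum_inter (scd n) F' hcov
  have step2 : ((scd n).map (fun l => (F' ∩ l.toFinset).card)).sum ≤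
      ((scd n).map (fun l => l.countP
        (fun A => decide (A.card ∈ Finset.Icc ((n - k) / 2) ((n + k) / 2))))).sum := by
    refine List.sum_le_sum ?_
    intro l hl
    exact chain_bound n k l (good_scd n l hl) F' hF2
  have step3 : ((scd n).map (fun l => l.countP
      (fun A => decide (A.card ∈ Finset.Icc ((n - k) / 2) ((n + k) / 2))))).sum =
      ∑ i ∈ Finset.Icc ((n - k) / 2) ((n + k) / 2), n.choose i := by
    have h1 := List.countP_flatMap
      (p := fun A : Finset ℕ => decide (A.card ∈ Finset.Icc ((n - k) / 2) ((n + k) / 2)))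
      (l := scd n) (f := id)
    simp only [Function.comp_def, id] at h1
    rw [← h1, countP_eq_card_filter _ (nodup_scd n), flat_scd, card_filter_powerset]
  omega
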